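/- arXiv:2510.11466 — 2 statements merged into one kernel-verified Lean document; each statement's English description precedes it below -/
import Mathlib

section
/- Let L be a free abelian group of finite rank and (α_i)_{i∈I} a finite ℤ-linearly independent family in L. Define μ ≤ λ for μ, λ ∈ L if λ − μ ∈ Σ_i ℕ·α_i. Then for any μ ≤ λ, the interval {ν ∈ L : μ ≤ ν ≤ λ} is finite. -/
/-!
STATEMENT 6: Let L be a free abelian group of finite rank and (α i) a finite ℤ-linearly
independent family in L.  Define μ ≤ λ if λ − μ is an ℕ-combination of the α i.  Then for any
μ ≤ λ the interval {ν : μ ≤ ν ≤ λ} is finite.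
-/

theorem statement6 (L : Type) [AddCommGroup L] [Module.Free ℤ L] [Module.Finite ℤ L]
    (I : Type) [Fintype I] (α : I → L) (hα : LinearIndependent ℤ α)
    (μ lam : L) (hle : ∃ c : I → ℕ, lam - μ = ∑ i, (c i : ℤ) • α i) :
    {ν : L | (∃ c : I → ℕ, ν - μ = ∑ i, (c i : ℤ) • α i) ∧
        (∃ c : I → ℕ, lam - ν = ∑ i, (c i : ℤ) • α i)}.Finite := by
  obtain ⟨d, hd⟩ := hle
  have hfin : (Set.univ.pi fun i : I => Set.Iic (d i)).Finite :=
    Set.Finite.pi fun i => Set.finite_Iic (d i)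
  apply Set.Finite.subset (hfin.image fun c : I → ℕ => μ + ∑ i, (c i : ℤ) • α i)
  rintro ν ⟨⟨c, hc⟩, ⟨c', hc'⟩⟩
  have hsum : ∑ i, ((c i : ℤ) + (c' i : ℤ) - d i) • α i = 0 := by
    have : (∑ i, (c i : ℤ) • α i) + (∑ i, (c' i : ℤ) • α i) = ∑ i, (d i : ℤ) • α i := by
      rw [← hc, ← hc', ← hd]; abel
    simp only [sub_smul, add_smul, Finset.sum_sub_distrib, Finset.sum_add_distrib, this,
      sub_self]
  have hcoeff := Fintype.linearIndependent_iff.mp hα _ hsum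
  refine ⟨c, fun i _ => Set.mem_Iic.mpr ?_, by simp only []; rw [← hc]; abel⟩
  have h1 := hcoeff i
  have h2 : c i + c' i = d i := by exact_mod_cast sub_eq_zero.mp h1
  exact Nat.le.intro h2
end

section
/- Let S be a scheme, Y an S-scheme, D ⊆ Y a closed subscheme whose open complement Y ∖ D maps isomorphically to S (so Y is a 'pointy' S-scheme). Let W be an S-scheme and W∘ ⊆ W an open subscheme. Then there is a natural bijection between: (i) S-morphisms σ∘: W∘ → Y such that (σ∘)⁻¹(D) is closed in W, and (ii) S-morphisms σ: W → Y such that σ⁻¹(D) ⊆ W∘; given by restriction σ ↦ σ|_{W∘}. -/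
/-!
STATEMENT 18: Let S be a scheme, Y an S-scheme, D ⊆ Y a closed subset whose open complement
maps isomorphically to S (a "pointy" S-scheme).  Let W be an S-scheme and W∘ = U ⊆ W an open
subscheme.  Then restriction gives a bijection between
(ii) S-morphisms σ : W → Y with σ⁻¹(D) ⊆ U, and
(i) S-morphisms σ∘ : U → Y such that σ∘⁻¹(D) is closed in W;
i.e. every σ as in (ii) restricts to a σ∘ as in (i), and every σ∘ as in (i) extends uniquely
to a σ as in (ii).
-/

open AlgebraicGeometry CategoryTheory

theorem AlgebraicGeometry.Scheme.comp_base_apply {X Y Z : Scheme} (f : X ⟶ Y) (g : Y ⟶ Z)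
    (x : X) : (f ≫ g).base x = g.base (f.base x) := rfl

open CategoryTheory.Limits in
/-- Two morphisms landing in `V`, with `V.ι ≫ qY` an isomorphism, that agree after composing
with `qY`, are equal. -/
private lemma eq_of_factor_through {Z Y S : Scheme} (qY : Y ⟶ S) (V : Y.Opens)
    (hiso : IsIso (V.ι ≫ qY)) (τ τ' : Z ⟶ Y)
    (hτ : Set.range τ.base ⊆ Set.range V.ι.base)
    (hτ' : Set.range τ'.base ⊆ Set.range V.ι.base)
    (h : τ ≫ qY = τ' ≫ qY) : τ = τ' := by
  have h1 := IsOpenImmersion.lift_fac V.ι τ hτ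
  have h2 := IsOpenImmersion.lift_fac V.ι τ' hτ'
  have key : IsOpenImmersion.lift V.ι τ hτ = IsOpenImmersion.lift V.ι τ' hτ' := by
    rw [← cancel_mono (V.ι ≫ qY), ← Category.assoc, ← Category.assoc, h1, h2, h]
  rw [← h1, ← h2, key]

open CategoryTheory.Limits in
theorem statement18 (S Y W : Scheme) (qY : Y ⟶ S) (qW : W ⟶ S)
    (D : Set Y) (hD : IsClosed D)
    (V : Y.Opens) (hV : (V : Set Y) = Dᶜ) (hiso : IsIso (V.ι ≫ qY))
    (U : W.Opens) :
    (∀ σ : W ⟶ Y, σ ≫ qY = qW → σ.base ⁻¹' D ⊆ (U : Set W) →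
      (U.ι ≫ σ) ≫ qY = U.ι ≫ qW ∧
        IsClosed (U.ι.base '' ((U.ι ≫ σ).base ⁻¹' D))) ∧
    (∀ σ₀ : U.toScheme ⟶ Y, σ₀ ≫ qY = U.ι ≫ qW →
      IsClosed (U.ι.base '' (σ₀.base ⁻¹' D)) →
      ∃! σ : W ⟶ Y, (σ ≫ qY = qW ∧ σ.base ⁻¹' D ⊆ (U : Set W)) ∧ U.ι ≫ σ = σ₀) := by
  classical
  constructor
  · -- restriction direction
    intro σ hσ hsub
    refine ⟨by rw [Category.assoc, hσ], ?_⟩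
    have him : U.ι.base '' ((U.ι ≫ σ).base ⁻¹' D) = σ.base ⁻¹' D := by
      ext w
      constructor
      · rintro ⟨u, hu, rfl⟩
        simpa [Scheme.comp_base_apply] using hu
      · intro hw
        obtain ⟨u, rfl⟩ : w ∈ Set.range U.ι.base := by
          rw [Scheme.Opens.range_ι]; exact hsub hw
        exact ⟨u, by simpa [Scheme.comp_base_apply] using hw, rfl⟩
    rw [him]
    exact hD.preimage σ.continuous
  · -- extension direction
    intro σ₀ hσ₀ hclosed
    set C : Set W := U.ι.base '' (σ₀.base ⁻¹' D) with hCdef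
    have hCU : C ⊆ (U : Set W) := by
      rintro _ ⟨u, -, rfl⟩
      rw [← Scheme.Opens.range_ι U]; exact ⟨u, rfl⟩
    set U' : W.Opens := ⟨Cᶜ, hclosed.isOpen_compl⟩ with hU'def
    -- the "base point" section
    set e : S ⟶ Y := inv (V.ι ≫ qY) ≫ V.ι with hedef
    have he_qY : e ≫ qY = 𝟙 S := by
      rw [hedef, Category.assoc, IsIso.inv_hom_id]
    have he_range : Set.range e.base ⊆ Set.range V.ι.base := by
      rintro _ ⟨s, rfl⟩
      exact ⟨(inv (V.ι ≫ qY)).base s, by rw [hedef, Scheme.comp_base_apply]⟩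
    set g' : U'.toScheme ⟶ Y := U'.ι ≫ qW ≫ e with hg'def
    have hg'V : ∀ p, g'.base p ∈ Set.range V.ι.base := by
      intro p
      rw [hg'def, Scheme.comp_base_apply, Scheme.comp_base_apply]
      exact he_range ⟨_, rfl⟩
    have hg'qY : g' ≫ qY = U'.ι ≫ qW := by
      rw [hg'def]
      simp only [Category.assoc, he_qY, Category.comp_id]
    -- key pointwise fact : σ₀ maps points outside C into V
    have hkey : ∀ u : U.toScheme, U.ι.base u ∈ (U' : Set W) → σ₀.base u ∈ (V : Set Y) := by
      intro u hu
      rw [hV]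
      intro hD'
      exact hu ⟨u, hD', rfl⟩
    -- the open cover of W by U and U'
    let 𝒰 : W.OpenCover :=
      { I₀ := ULift.{0} Bool
        X := fun b => match b with | ⟨true⟩ => U.toScheme | ⟨false⟩ => U'.toScheme
        f := fun b => match b with | ⟨true⟩ => U.ι | ⟨false⟩ => U'.ι
        mem₀ := by
          rw [Scheme.presieve₀_mem_precoverage_iff]
          refine ⟨fun x => ⟨⟨if x ∈ (U : Set W) then true else false⟩, ?_⟩, ?_⟩
          dsimp only
          by_cases hx : x ∈ (U : Set W)
          · rw [if_pos hx]
            show x ∈ Set.range U.ι.base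
            rw [Scheme.Opens.range_ι]; exact hx
          · rw [if_neg hx]
            show x ∈ Set.range U'.ι.base
            rw [Scheme.Opens.range_ι]
            exact fun hc => hx (hCU hc)
          intro b; obtain ⟨b⟩ := b; cases b <;> infer_instance }
    let fam : ∀ b : 𝒰.I₀, 𝒰.X b ⟶ Y :=
      fun b => match b with | ⟨true⟩ => σ₀ | ⟨false⟩ => g'
    have hf : ∀ x y, pullback.fst (𝒰.f x) (𝒰.f y) ≫ fam x
        = pullback.snd (𝒰.f x) (𝒰.f y) ≫ fam y := by
      rintro ⟨x⟩ ⟨y⟩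
      cases x <;> cases y
      · show pullback.fst U'.ι U'.ι ≫ g' = pullback.snd U'.ι U'.ι ≫ g'
        rw [fst_eq_snd_of_mono_eq]
      · -- x = false (U'), y = true (U)
        show pullback.fst U'.ι U.ι ≫ g' = pullback.snd U'.ι U.ι ≫ σ₀
        apply eq_of_factor_through qY V hiso
        · rintro _ ⟨p, rfl⟩
          rw [Scheme.comp_base_apply]
          exact hg'V _
        · rintro _ ⟨p, rfl⟩
          rw [Scheme.comp_base_apply, Scheme.Opens.range_ι]
          apply hkey
          have hc := congrArg (fun m : _ ⟶ W => m.base p)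
            (pullback.condition (f := U'.ι) (g := U.ι))
          simp only [Scheme.comp_base_apply] at hc
          rw [← hc]
          rw [← Scheme.Opens.range_ι U']
          exact ⟨_, rfl⟩
        · simp only [hg'def, Category.assoc, he_qY, Category.comp_id, hσ₀]
          rw [← Category.assoc, ← Category.assoc, pullback.condition]
      · -- x = true (U), y = false (U')
        show pullback.fst U.ι U'.ι ≫ σ₀ = pullback.snd U.ι U'.ι ≫ g'
        apply eq_of_factor_through qY V hiso
        · rintro _ ⟨p, rfl⟩
          rw [Scheme.comp_base_apply, Scheme.Opens.range_ι]
          apply hkey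
          have hc := congrArg (fun m : _ ⟶ W => m.base p)
            (pullback.condition (f := U.ι) (g := U'.ι))
          simp only [Scheme.comp_base_apply] at hc
          rw [hc, ← Scheme.Opens.range_ι U']
          exact ⟨_, rfl⟩
        · rintro _ ⟨p, rfl⟩
          rw [Scheme.comp_base_apply]
          exact hg'V _
        · simp only [hg'def, Category.assoc, he_qY, Category.comp_id, hσ₀]
          rw [← Category.assoc, ← Category.assoc, pullback.condition]
      · show pullback.fst U.ι U.ι ≫ σ₀ = pullback.snd U.ι U.ι ≫ σ₀
        rw [fst_eq_snd_of_mono_eq]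
    let σ : W ⟶ Y := 𝒰.glueMorphisms fam hf
    have hU : U.ι ≫ σ = σ₀ := 𝒰.ι_glueMorphisms fam hf ⟨true⟩
    have hU' : U'.ι ≫ σ = g' := 𝒰.ι_glueMorphisms fam hf ⟨false⟩
    have hq : σ ≫ qY = qW := by
      apply 𝒰.hom_ext
      rintro ⟨b⟩
      cases b
      · show U'.ι ≫ σ ≫ qY = U'.ι ≫ qW
        rw [← Category.assoc, hU', hg'qY]
      · show U.ι ≫ σ ≫ qY = U.ι ≫ qW
        rw [← Category.assoc, hU, hσ₀]
    have hpre : σ.base ⁻¹' D ⊆ (U : Set W) := by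
      intro w hw
      by_contra hwU
      have hw' : w ∈ (U' : Set W) := fun hc => hwU (hCU hc)
      obtain ⟨p, rfl⟩ : w ∈ Set.range U'.ι.base := by
        rw [Scheme.Opens.range_ι]; exact hw'
      have hval : σ.base (U'.ι.base p) = g'.base p := by
        rw [← Scheme.comp_base_apply, hU']
      rw [Set.mem_preimage, hval] at hw
      have hmem : g'.base p ∈ (V : Set Y) := by
        rw [← Scheme.Opens.range_ι V]; exact hg'V p
      rw [hV] at hmem
      exact hmem hw
    refine ⟨σ, ⟨⟨hq, hpre⟩, hU⟩, ?_⟩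
    rintro σ' ⟨⟨hq', hpre'⟩, hres'⟩
    apply 𝒰.hom_ext
    rintro ⟨b⟩
    cases b
    · show U'.ι ≫ σ' = U'.ι ≫ σ
      rw [hU']
      apply eq_of_factor_through qY V hiso
      · rintro _ ⟨p, rfl⟩
        rw [Scheme.comp_base_apply, Scheme.Opens.range_ι, hV]
        intro hDmem
        have hUmem : U'.ι.base p ∈ (U : Set W) := hpre' hDmem
        obtain ⟨u, hu⟩ : U'.ι.base p ∈ Set.range U.ι.base := by
          rw [Scheme.Opens.range_ι]; exact hUmem
        have hC : U'.ι.base p ∈ C := by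
          refine ⟨u, ?_, hu⟩
          show σ₀.base u ∈ D
          rw [← hres', Scheme.comp_base_apply, hu]
          exact hDmem
        have : U'.ι.base p ∈ (U' : Set W) := by
          rw [← Scheme.Opens.range_ι U']; exact ⟨p, rfl⟩
        exact this hC
      · rintro _ ⟨p, rfl⟩
        exact hg'V _
      · rw [Category.assoc, hq', hg'qY]
    · show U.ι ≫ σ' = U.ι ≫ σ
      rw [hU, hres']
end
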